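/- Let B be a finite left regular band, k a commutative ring with unit, e ∈ B, and L := {b ∈ B : Bb = Be}. Let M := B →₀ k (finitely supported functions) and N ⊆ M the k-submodule of elements supported in L. For a ∈ B let T_a : M → M be the k-linear map induced on basis elements by b ↦ a·b (Finsupp.lmapDomain along left multiplication by a). Suppose φ : M → M is a k-linear map such that φ(N) ⊆ N and such that for every a ∈ B with Be ⊆ Ba and every f ∈ N, φ(T_a f) = T_a(φ f). Then there is a scalar c ∈ k with φ(f) = c·f for all f ∈ N. (Thus the endomorphism ring of the Schützenberger representation kL over kB is isomorphic to k; in particular, over a field, kL is indecomposable.) -/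

import Mathlib

/-- The principal left ideal of `a` in a semigroup: `Ba = {x * a : x ∈ B}`. -/
def leftIdeal {B : Type*} [Mul B] (a : B) : Set B := {x : B | ∃ y : B, y * a = x}

lemma leftIdeal_subset_iff {B : Type*} [Semigroup B] (idem : ∀ x : B, x * x = x)
    {a b : B} : leftIdeal a ⊆ leftIdeal b ↔ a * b = a := by
  constructor
  · intro h
    obtain ⟨y, hy⟩ := h ⟨a, idem a⟩
    calc a * b = y * b * b := by rw [hy]
    _ = y * (b * b) := mul_assoc _ _ _
    _ = y * b := by rw [idem]
    _ = a := hy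
  · rintro h x ⟨y, hy⟩
    exact ⟨y * a, by rw [mul_assoc, h, hy]⟩

/-- The endomorphism ring of the Schützenberger representation of a finite left
regular band is `k`: any `k`-linear endomorphism of `B →₀ k` preserving the span `N`
of the `L`-class of `e` and commuting on `N` with the action of every `a` with
`Be ⊆ Ba` is multiplication by a scalar on `N`.  In particular, over a field the
Schützenberger representation is indecomposable. -/
theorem stmt18 {B : Type*} [Semigroup B] [Fintype B]
    (idem : ∀ x : B, x * x = x) (lrb : ∀ x y : B, x * y * x = x * y)
    {k : Type*} [CommRing k] (e : B)
    (φ : (B →₀ k) →ₗ[k] (B →₀ k))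
    (hN : ∀ f : B →₀ k, (∀ b : B, f b ≠ 0 → leftIdeal b = leftIdeal e) →
      ∀ b : B, (φ f) b ≠ 0 → leftIdeal b = leftIdeal e)
    (hcomm : ∀ a : B, leftIdeal e ⊆ leftIdeal a →
      ∀ f : B →₀ k, (∀ b : B, f b ≠ 0 → leftIdeal b = leftIdeal e) →
        φ (Finsupp.lmapDomain k k (fun b => a * b) f) =
          Finsupp.lmapDomain k k (fun b => a * b) (φ f)) :
    ∃ c : k, ∀ f : B →₀ k,
      (∀ b : B, f b ≠ 0 → leftIdeal b = leftIdeal e) → φ f = c • f := by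
  classical
  set g : B →₀ k := φ (Finsupp.single e 1) with hg
  set c : k := g.sum (fun _ v => v) with hc
  refine ⟨c, ?_⟩
  have hsuppE : ∀ b' : B, (Finsupp.single e (1:k)) b' ≠ 0 → leftIdeal b' = leftIdeal e := by
    intro b' h
    rcases eq_or_ne b' e with rfl | hne
    · rfl
    · exact absurd (Finsupp.single_eq_of_ne' hne.symm) h
  -- support of g is in the L-class of e
  have hgsupp : ∀ b' : B, g b' ≠ 0 → leftIdeal b' = leftIdeal e :=
    hN _ hsuppE
  -- step A : φ (single e 1) = c • single e 1
  have stepA : g = c • Finsupp.single e 1 := by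
    have hA := hcomm e (subset_refl _) (Finsupp.single e 1) hsuppE
    rw [Finsupp.lmapDomain_apply, Finsupp.lmapDomain_apply, Finsupp.mapDomain_single,
      idem e, ← hg] at hA
    -- hA : g = Finsupp.mapDomain (fun b => e * b) g
    have : Finsupp.mapDomain (fun b => e * b) g = Finsupp.single e c := by
      rw [Finsupp.mapDomain, hc]
      rw [Finsupp.sum, Finsupp.sum, Finsupp.single_finset_sum]
      apply Finset.sum_congr rfl
      intro b' hb'
      have hL : leftIdeal b' = leftIdeal e := hgsupp b' (Finsupp.mem_support_iff.mp hb')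
      have : e * b' = e := (leftIdeal_subset_iff idem).mp hL.ge
      rw [this]
    rw [hA, this, Finsupp.smul_single, smul_eq_mul, mul_one]
  -- step B : φ (single b 1) = c • single b 1 for b in the L-class
  have stepB : ∀ b : B, leftIdeal b = leftIdeal e →
      φ (Finsupp.single b 1) = c • Finsupp.single b 1 := by
    intro b hb
    have hbe : b * e = b := (leftIdeal_subset_iff idem).mp hb.le
    have hB := hcomm b (hb ▸ subset_refl _) (Finsupp.single e 1) hsuppE
    rw [Finsupp.lmapDomain_apply, Finsupp.lmapDomain_apply, Finsupp.mapDomain_single,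
      hbe, ← hg, stepA, Finsupp.mapDomain_smul, Finsupp.mapDomain_single, hbe] at hB
    exact hB
  -- conclusion: extend by linearity
  intro f hf
  have hrepr : f = ∑ b ∈ f.support, Finsupp.single b (f b) := by
    conv_lhs => rw [← Finsupp.sum_single f]
    rfl
  rw [hrepr, map_sum, Finset.smul_sum]
  apply Finset.sum_congr rfl
  intro b hb
  have hL : leftIdeal b = leftIdeal e := hf b (Finsupp.mem_support_iff.mp hb)
  have : Finsupp.single b (f b) = (f b) • Finsupp.single b (1:k) := by
    rw [Finsupp.smul_single, smul_eq_mul, mul_one]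
  rw [this, map_smul, stepB b hL, smul_comm]
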